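/- Suppose 𝒜 has the (3s₁,3s₂,2)-restricted isometry property with constant δ > 0, u ∈ ℂ^{n₁} is s₁-sparse with ‖u‖ = 1, v ∈ ℂ^{n₂} is s₂-sparse with ‖v‖ = 1, z ∈ ℂ^m, 𝒜(uv*) ≠ 0, ν := ‖z‖/‖𝒜(uv*)‖, and b := 𝒜(uv*) + z. Then for every J₁ ⊆ [n₁] with |J₁| ≤ s₁ and every index k ∈ [n₂], ‖Π_{J₁}·𝒜*(b)·Π_{{k}}‖_F ≤ ‖Π_{J₁} u‖·|v_k| + (δ + ν + δν). -/

import Mathlib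

set_option maxHeartbeats 4000000


open scoped BigOperators
noncomputable section
open Classical

/-- The ℓ₂ norm of a vector in ℂ^n. -/
def l2norm {n : ℕ} (x : Fin n → ℂ) : ℝ := Real.sqrt (∑ i, ‖x i‖ ^ 2)

/-- The Frobenius norm of a matrix. -/
def frobNorm {n₁ n₂ : ℕ} (X : Matrix (Fin n₁) (Fin n₂) ℂ) : ℝ :=
  Real.sqrt (∑ i, ∑ j, ‖X i j‖ ^ 2)

/-- The spectral norm (ℓ₂ operator norm) of a matrix. -/
def specNorm {n₁ n₂ : ℕ} (X : Matrix (Fin n₁) (Fin n₂) ℂ) : ℝ :=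
  sSup {c : ℝ | ∃ x : Fin n₂ → ℂ, l2norm x = 1 ∧ c = l2norm (X.mulVec x)}

/-- A vector is `s`-sparse if it has at most `s` nonzero entries. -/
def Sparse {n : ℕ} (s : ℕ) (x : Fin n → ℂ) : Prop :=
  {i | x i ≠ 0}.ncard ≤ s

/-- The linear map 𝒜 determined by the matrices A₁, …, A_m. -/
def opA {n₁ n₂ m : ℕ} (A : Fin m → Matrix (Fin n₁) (Fin n₂) ℂ)
    (X : Matrix (Fin n₁) (Fin n₂) ℂ) : Fin m → ℂ :=
  fun ℓ => ((A ℓ).conjTranspose * X).trace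

/-- The adjoint 𝒜* of 𝒜 with respect to the Frobenius inner product. -/
def opAadj {n₁ n₂ m : ℕ} (A : Fin m → Matrix (Fin n₁) (Fin n₂) ℂ)
    (z : Fin m → ℂ) : Matrix (Fin n₁) (Fin n₂) ℂ :=
  ∑ ℓ, z ℓ • A ℓ

/-- The (s₁, s₂, r)-restricted isometry property with constant δ. -/
def RIP {n₁ n₂ m : ℕ} (A : Fin m → Matrix (Fin n₁) (Fin n₂) ℂ)
    (s₁ s₂ r : ℕ) (δ : ℝ) : Prop :=
  ∀ X : Matrix (Fin n₁) (Fin n₂) ℂ, X.rank ≤ r →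
    {i | X i ≠ 0}.ncard ≤ s₁ → {j | X.transpose j ≠ 0}.ncard ≤ s₂ →
    (1 - δ) * frobNorm X ^ 2 ≤ l2norm (opA A X) ^ 2 ∧
      l2norm (opA A X) ^ 2 ≤ (1 + δ) * frobNorm X ^ 2

/-- The diagonal 0/1 projection matrix onto the coordinates in `J`. -/
def proj {n : ℕ} (J : Finset (Fin n)) : Matrix (Fin n) (Fin n) ℂ :=
  Matrix.diagonal fun i => if i ∈ J then 1 else 0

/-- The outer product u v^*. -/
def outer {n₁ n₂ : ℕ} (u : Fin n₁ → ℂ) (v : Fin n₂ → ℂ) :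
    Matrix (Fin n₁) (Fin n₂) ℂ :=
  Matrix.of fun i j => u i * star (v j)

/-- The norm ‖x‖_[k] : the ℓ₂ norm of the best k-sparse approximation of x. -/
def knorm {n : ℕ} (k : ℕ) (x : Fin n → ℂ) : ℝ :=
  sSup {c : ℝ | ∃ I : Finset (Fin n), I.card = k ∧ c = Real.sqrt (∑ i ∈ I, ‖x i‖ ^ 2)}

/-- The ℓ∞ norm of a vector. -/
def linftyNorm {n : ℕ} (x : Fin n → ℂ) : ℝ :=
  sSup {c : ℝ | ∃ i, c = ‖x i‖}

/-- The sine of the angle between two unit vectors. -/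
def sinAngle {n : ℕ} (w v : Fin n → ℂ) : ℝ :=
  Real.sqrt (1 - ‖∑ i, star (w i) * v i‖ ^ 2)


namespace ColumnUB

def toE {n : ℕ} (x : Fin n → ℂ) : EuclideanSpace ℂ (Fin n) := WithLp.toLp 2 x

def toME {n₁ n₂ : ℕ} (X : Matrix (Fin n₁) (Fin n₂) ℂ) : EuclideanSpace ℂ (Fin n₁ × Fin n₂) :=
  WithLp.toLp 2 fun p => X p.1 p.2

lemma l2norm_eq {n : ℕ} (x : Fin n → ℂ) : l2norm x = ‖toE x‖ := by
  rw [EuclideanSpace.norm_eq]; rfl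

lemma frobNorm_eq {n₁ n₂ : ℕ} (X : Matrix (Fin n₁) (Fin n₂) ℂ) : frobNorm X = ‖toME X‖ := by
  rw [EuclideanSpace.norm_eq, Fintype.sum_prod_type]; rfl

lemma toE_add {n : ℕ} (x y : Fin n → ℂ) : toE (x + y) = toE x + toE y := rfl
lemma toE_sub {n : ℕ} (x y : Fin n → ℂ) : toE (x - y) = toE x - toE y := rfl
lemma toME_add {n₁ n₂ : ℕ} (X Y : Matrix (Fin n₁) (Fin n₂) ℂ) : toME (X + Y) = toME X + toME Y := rfl
lemma toME_sub {n₁ n₂ : ℕ} (X Y : Matrix (Fin n₁) (Fin n₂) ℂ) : toME (X - Y) = toME X - toME Y := rfl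
lemma toME_smul {n₁ n₂ : ℕ} (c : ℂ) (X : Matrix (Fin n₁) (Fin n₂) ℂ) :
    toME (c • X) = c • toME X := rfl

lemma toE_eq_zero {n : ℕ} {x : Fin n → ℂ} (h : toE x = 0) : x = 0 := congrArg WithLp.ofLp h
lemma toME_eq_zero {n₁ n₂ : ℕ} {X : Matrix (Fin n₁) (Fin n₂) ℂ} (h : toME X = 0) : X = 0 := by
  ext i j
  exact congrFun (congrArg WithLp.ofLp h) (i, j)

lemma l2norm_pos {n : ℕ} {x : Fin n → ℂ} (hx : x ≠ 0) : 0 < l2norm x := by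
  rw [l2norm_eq]
  exact norm_pos_iff.mpr fun h => hx (toE_eq_zero h)

lemma innerE {n : ℕ} (x y : Fin n → ℂ) :
    (inner ℂ (toE x) (toE y) : ℂ) = ∑ i, star (x i) * y i := by
  simp [toE, PiLp.inner_apply, RCLike.inner_apply, mul_comm]

lemma innerME {n₁ n₂ : ℕ} (X Y : Matrix (Fin n₁) (Fin n₂) ℂ) :
    (inner ℂ (toME X) (toME Y) : ℂ) = ∑ i, ∑ j, star (X i j) * Y i j := by
  rw [PiLp.inner_apply, Fintype.sum_prod_type]
  simp [toME, RCLike.inner_apply, mul_comm]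

lemma rank_le_two {n₁ n₂ : ℕ} (a b : Fin n₁ → ℂ) (c d : Fin n₂ → ℂ) :
    (Matrix.of fun i j => a i * c j + b i * d j : Matrix (Fin n₁) (Fin n₂) ℂ).rank ≤ 2 := by
  have h : (Matrix.of fun i j => a i * c j + b i * d j : Matrix (Fin n₁) (Fin n₂) ℂ) =
      (Matrix.of fun i (t : Fin 2) => if t = 0 then a i else b i) *
      (Matrix.of fun (t : Fin 2) j => if t = 0 then c j else d j) := by
    ext i j
    simp [Matrix.mul_apply, Fin.sum_univ_two]
  rw [h]
  refine (Matrix.rank_mul_le_left _ _).trans ?_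
  simpa using Matrix.rank_le_card_width (Matrix.of fun i (t : Fin 2) => if t = 0 then a i else b i)

lemma opA_add {n₁ n₂ m : ℕ} (A : Fin m → Matrix (Fin n₁) (Fin n₂) ℂ)
    (X Y : Matrix (Fin n₁) (Fin n₂) ℂ) : opA A (X + Y) = opA A X + opA A Y := by
  funext ℓ; simp [opA, Matrix.mul_add]

lemma opA_sub {n₁ n₂ m : ℕ} (A : Fin m → Matrix (Fin n₁) (Fin n₂) ℂ)
    (X Y : Matrix (Fin n₁) (Fin n₂) ℂ) : opA A (X - Y) = opA A X - opA A Y := by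
  funext ℓ; simp [opA, Matrix.mul_sub]

lemma projEntry {n₁ n₂ : ℕ} (J : Finset (Fin n₁)) (K : Finset (Fin n₂))
    (M : Matrix (Fin n₁) (Fin n₂) ℂ) (i : Fin n₁) (j : Fin n₂) :
    (proj J * M * proj K) i j =
      (if i ∈ J then 1 else 0) * M i j * (if j ∈ K then 1 else 0) := by
  rw [proj, proj, Matrix.mul_diagonal, Matrix.diagonal_mul]

lemma adj_inner {n₁ n₂ m : ℕ} (A : Fin m → Matrix (Fin n₁) (Fin n₂) ℂ)
    (b : Fin m → ℂ) (Z : Matrix (Fin n₁) (Fin n₂) ℂ) :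
    ∑ i, ∑ j, star ((opAadj A b) i j) * Z i j = ∑ ℓ, star (b ℓ) * (opA A Z ℓ) := by
  have h1 : ∀ ℓ, opA A Z ℓ = ∑ j, ∑ i, star (A ℓ i j) * Z i j := by
    intro ℓ
    simp [opA, Matrix.trace, Matrix.diag, Matrix.mul_apply, Matrix.conjTranspose_apply]
  calc ∑ i, ∑ j, star ((opAadj A b) i j) * Z i j
      = ∑ i, ∑ j, ∑ ℓ, star (b ℓ) * (star (A ℓ i j) * Z i j) := by
        refine Finset.sum_congr rfl fun i _ => Finset.sum_congr rfl fun j _ => ?_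
        simp only [opAadj, Matrix.sum_apply, Matrix.smul_apply, smul_eq_mul, star_sum,
          star_mul', Finset.sum_mul]
        exact Finset.sum_congr rfl fun ℓ _ => by ring
    _ = ∑ i, ∑ ℓ, ∑ j, star (b ℓ) * (star (A ℓ i j) * Z i j) :=
        Finset.sum_congr rfl fun i _ => Finset.sum_comm
    _ = ∑ ℓ, ∑ i, ∑ j, star (b ℓ) * (star (A ℓ i j) * Z i j) := Finset.sum_comm
    _ = ∑ ℓ, star (b ℓ) * (opA A Z ℓ) := by
        refine Finset.sum_congr rfl fun ℓ _ => ?_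
        rw [h1, Finset.sum_comm, Finset.mul_sum]
        exact Finset.sum_congr rfl fun i _ => by rw [Finset.mul_sum]

lemma prod_bound {a b c : ℝ} (ha : 0 ≤ a) (hb : 0 ≤ b) (h1 : a ^ 2 ≤ c) (h2 : b ^ 2 ≤ c) :
    a * b ≤ c := by nlinarith [sq_nonneg (a - b)]

lemma sumsq_one {n : ℕ} {x : Fin n → ℂ} (hx : l2norm x = 1) : ∑ i, ‖x i‖ ^ 2 = 1 :=
  Real.sqrt_eq_one.mp hx

lemma row_support_add {n₁ n₂ : ℕ} (X Z : Matrix (Fin n₁) (Fin n₂) ℂ) :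
    {i | (X + Z) i ≠ 0} ⊆ {i | X i ≠ 0} ∪ {i | Z i ≠ 0} := by
  intro i hi
  by_contra h
  simp only [Set.mem_union, Set.mem_setOf_eq, not_or, not_not] at h
  exact hi (by show X i + Z i = 0; rw [h.1, h.2, add_zero])

lemma row_support_sub {n₁ n₂ : ℕ} (X Z : Matrix (Fin n₁) (Fin n₂) ℂ) :
    {i | (X - Z) i ≠ 0} ⊆ {i | X i ≠ 0} ∪ {i | Z i ≠ 0} := by
  intro i hi
  by_contra h
  simp only [Set.mem_union, Set.mem_setOf_eq, not_or, not_not] at h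
  exact hi (by show X i - Z i = 0; rw [h.1, h.2, sub_zero])

end ColumnUB

/-- Upper bound -/
theorem column_upper_bound {n₁ n₂ m s₁ s₂ : ℕ} (δ : ℝ) (hδ : 0 < δ)
    (A : Fin m → Matrix (Fin n₁) (Fin n₂) ℂ)
    (hRIP : RIP A (3 * s₁) (3 * s₂) 2 δ)
    (u : Fin n₁ → ℂ) (hu : Sparse s₁ u) (hun : l2norm u = 1)
    (v : Fin n₂ → ℂ) (hv : Sparse s₂ v) (hvn : l2norm v = 1)
    (z : Fin m → ℂ) (hA : opA A (outer u v) ≠ 0)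
    (ν : ℝ) (hν : ν = l2norm z / l2norm (opA A (outer u v)))
    (b : Fin m → ℂ) (hb : b = opA A (outer u v) + z)
    (J₁ : Finset (Fin n₁)) (hJ₁ : J₁.card ≤ s₁) (k : Fin n₂) :
    frobNorm (proj J₁ * opAadj A b * proj {k}) ≤
      l2norm ((proj J₁).mulVec u) * ‖v k‖ + (δ + ν + δ * ν) := by
  classical
  open ColumnUB in
  show frobNorm (proj J₁ * opAadj A b * proj {k}) ≤
      l2norm ((proj J₁).mulVec u) * ‖v k‖ + (δ + ν + δ * ν)
  set X₀ : Matrix (Fin n₁) (Fin n₂) ℂ := outer u v with hX₀def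
  set B : Matrix (Fin n₁) (Fin n₂) ℂ := opAadj A b with hBdef
  set Y : Matrix (Fin n₁) (Fin n₂) ℂ := proj J₁ * B * proj {k} with hYdef
  have hνnn : 0 ≤ ν := by
    rw [hν]; exact div_nonneg (Real.sqrt_nonneg _) (Real.sqrt_nonneg _)
  have hl2nn : 0 ≤ l2norm ((proj J₁).mulVec u) := Real.sqrt_nonneg _
  have hrhs0 : 0 ≤ l2norm ((proj J₁).mulVec u) * ‖v k‖ :=
    mul_nonneg hl2nn (norm_nonneg _)
  -- s₂ ≥ 1
  have hs₂ : 1 ≤ s₂ := by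
    by_contra h
    push_neg at h
    have hvz : v = 0 := by
      funext j
      by_contra hj
      have h1 : 0 < {j | v j ≠ 0}.ncard :=
        (Set.ncard_pos (Set.toFinite _)).mpr ⟨j, hj⟩
      have := hv
      unfold Sparse at this
      omega
    rw [hvz] at hvn
    simp [l2norm] at hvn
  -- sum of squares
  have hu2 : ∑ i, ‖u i‖ ^ 2 = 1 := ColumnUB.sumsq_one hun
  have hv2 : ∑ j, ‖v j‖ ^ 2 = 1 := ColumnUB.sumsq_one hvn
  -- Frobenius norm of X₀ is 1
  have hX₀entry : ∀ i j, X₀ i j = u i * star (v j) := fun i j => rfl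
  have hfrobX₀ : frobNorm X₀ = 1 := by
    unfold frobNorm
    rw [Real.sqrt_eq_one]
    have : ∀ i j, ‖X₀ i j‖ ^ 2 = ‖u i‖ ^ 2 * ‖v j‖ ^ 2 := by
      intro i j
      rw [hX₀entry, norm_mul, norm_star, mul_pow]
    calc ∑ i, ∑ j, ‖X₀ i j‖ ^ 2 = ∑ i, ∑ j, ‖u i‖ ^ 2 * ‖v j‖ ^ 2 := by
          exact Finset.sum_congr rfl fun i _ => Finset.sum_congr rfl fun j _ => this i j
      _ = (∑ i, ‖u i‖ ^ 2) * ∑ j, ‖v j‖ ^ 2 := (Finset.sum_mul_sum _ _ _ _).symm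
      _ = 1 := by rw [hu2, hv2, one_mul]
  -- rank of X₀
  have hrankX₀ : X₀.rank ≤ 2 := by
    have h : X₀ = Matrix.of fun i j => u i * star (v j) + (fun _ : Fin n₁ => (0:ℂ)) i *
        (fun _ : Fin n₂ => (0:ℂ)) j := by
      ext i j; simp [hX₀entry]
    rw [h]; exact ColumnUB.rank_le_two _ _ _ _
  -- row/col supports of X₀
  have hX₀row : {i | X₀ i ≠ 0} ⊆ {i | u i ≠ 0} := by
    intro i hi
    simp only [Set.mem_setOf_eq] at hi ⊢
    intro hui
    exact hi (funext fun j => by rw [hX₀entry, hui, zero_mul]; rfl)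
  have hX₀col : {j | X₀.transpose j ≠ 0} ⊆ {j | v j ≠ 0} := by
    intro j hj
    simp only [Set.mem_setOf_eq] at hj ⊢
    intro hvj
    refine hj (funext fun i => ?_)
    show X₀ i j = 0
    rw [hX₀entry, hvj, star_zero, mul_zero]
  have hX₀rowc : {i | X₀ i ≠ 0}.ncard ≤ s₁ :=
    le_trans (Set.ncard_le_ncard hX₀row (Set.toFinite _)) hu
  have hX₀colc : {j | X₀.transpose j ≠ 0}.ncard ≤ s₂ :=
    le_trans (Set.ncard_le_ncard hX₀col (Set.toFinite _)) hv
  -- RIP for X₀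
  have hRIPX₀ := hRIP X₀ hrankX₀ (le_trans hX₀rowc (by omega)) (le_trans hX₀colc (by omega))
  have hAX₀sq : l2norm (opA A X₀) ^ 2 ≤ 1 + δ := by
    have := hRIPX₀.2
    rw [hfrobX₀] at this
    simpa using this
  have hρ₀ : 0 < l2norm (opA A X₀) := ColumnUB.l2norm_pos hA
  have hz : l2norm z = ν * l2norm (opA A X₀) := by
    rw [hν]
    field_simp
  -- Case Y = 0
  by_cases hYz : Y = 0
  · rw [hYz]
    have h0 : frobNorm (0 : Matrix (Fin n₁) (Fin n₂) ℂ) = 0 := by simp [frobNorm]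
    rw [h0]
    nlinarith
  -- Main case
  have hρ : 0 < frobNorm Y := by
    rw [ColumnUB.frobNorm_eq]
    exact norm_pos_iff.mpr fun h => hYz (ColumnUB.toME_eq_zero h)
  set c : ℝ := (frobNorm Y)⁻¹ with hcdef
  have hc : 0 < c := inv_pos.mpr hρ
  set W : Matrix (Fin n₁) (Fin n₂) ℂ := ((c : ℝ) : ℂ) • Y with hWdef
  have hWentry : ∀ i j, W i j = (c : ℂ) * Y i j := by
    intro i j; rw [hWdef]; simp [Matrix.smul_apply]
  have hYentry : ∀ i j, Y i j =
      (if i ∈ J₁ then 1 else 0) * B i j * (if j ∈ ({k} : Finset (Fin n₂)) then 1 else 0) :=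
    fun i j => projEntry J₁ {k} B i j
  have hY0 : ∀ i j, i ∉ J₁ ∨ j ≠ k → Y i j = 0 := by
    intro i j hij
    rw [hYentry]
    rcases hij with h | h
    · rw [if_neg h]; ring
    · have hns : j ∉ ({k} : Finset (Fin n₂)) := by simpa using h
      rw [if_neg hns]; ring
  have hW0 : ∀ i j, i ∉ J₁ ∨ j ≠ k → W i j = 0 := by
    intro i j hij
    rw [hWentry, hY0 i j hij, mul_zero]
  -- Frobenius norm of W is 1
  have htW : ColumnUB.toME W = ((c : ℝ) : ℂ) • ColumnUB.toME Y := ColumnUB.toME_smul _ _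
  have hfrobW : frobNorm W = 1 := by
    rw [ColumnUB.frobNorm_eq, htW, norm_smul]
    simp only [Complex.norm_real, Real.norm_eq_abs, abs_of_pos hc]
    rw [← ColumnUB.frobNorm_eq, hcdef]
    exact inv_mul_cancel₀ (ne_of_gt hρ)
  -- rank and supports of W
  have hrankW : W.rank ≤ 2 := by
    have h : W = Matrix.of fun i j => (fun i => W i k) i *
        (fun j => if j = k then (1:ℂ) else 0) j + (fun _ : Fin n₁ => (0:ℂ)) i *
        (fun _ : Fin n₂ => (0:ℂ)) j := by
      ext i j
      by_cases hj : j = k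
      · subst hj; simp
      · simp [hj, hW0 i j (Or.inr hj)]
    rw [h]; exact ColumnUB.rank_le_two _ _ _ _
  have hWrow : {i | W i ≠ 0} ⊆ ↑J₁ := by
    intro i hi
    simp only [Set.mem_setOf_eq] at hi
    by_contra hiJ
    exact hi (funext fun j => hW0 i j (Or.inl hiJ))
  have hWcol : {j | W.transpose j ≠ 0} ⊆ {k} := by
    intro j hj
    simp only [Set.mem_setOf_eq] at hj
    by_contra hjk
    refine hj (funext fun i => ?_)
    show W i j = 0
    exact hW0 i j (Or.inr (by simpa using hjk))
  have hWrowc : {i | W i ≠ 0}.ncard ≤ s₁ := by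
    refine le_trans (Set.ncard_le_ncard hWrow (J₁.finite_toSet)) ?_
    rw [Set.ncard_coe_finset]; exact hJ₁
  have hWcolc : {j | W.transpose j ≠ 0}.ncard ≤ 1 := by
    refine le_trans (Set.ncard_le_ncard hWcol (Set.finite_singleton k)) ?_
    simp
  -- RIP for W
  have hRIPW := hRIP W hrankW (le_trans hWrowc (by omega)) (le_trans hWcolc (by omega))
  have hAWsq : l2norm (opA A W) ^ 2 ≤ 1 + δ := by
    have := hRIPW.2
    rw [hfrobW] at this
    simpa using this
  -- RIP for X₀ ± W
  have hsum_rank : (X₀ + W).rank ≤ 2 := by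
    have h : X₀ + W = Matrix.of fun i j => u i * star (v j) + (fun i => W i k) i *
        (fun j => if j = k then (1:ℂ) else 0) j := by
      ext i j
      show X₀ i j + W i j = _
      by_cases hj : j = k
      · subst hj; simp [hX₀entry]
      · simp [hj, hX₀entry, hW0 i j (Or.inr hj)]
    rw [h]; exact ColumnUB.rank_le_two _ _ _ _
  have hsub_rank : (X₀ - W).rank ≤ 2 := by
    have h : X₀ - W = Matrix.of fun i j => u i * star (v j) + (fun i => -(W i k)) i *
        (fun j => if j = k then (1:ℂ) else 0) j := by
      ext i j
      show X₀ i j - W i j = _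
      by_cases hj : j = k
      · subst hj; simp [hX₀entry]; ring
      · simp [hj, hX₀entry, hW0 i j (Or.inr hj)]
    rw [h]; exact ColumnUB.rank_le_two _ _ _ _
  have hrow_pm : ∀ M : Matrix (Fin n₁) (Fin n₂) ℂ,
      {i | M i ≠ 0} ⊆ {i | X₀ i ≠ 0} ∪ {i | W i ≠ 0} → {i | M i ≠ 0}.ncard ≤ 3 * s₁ := by
    intro M hM
    refine le_trans (Set.ncard_le_ncard hM (Set.toFinite _)) (le_trans (Set.ncard_union_le _ _) ?_)
    omega
  have hcol_pm : ∀ M : Matrix (Fin n₁) (Fin n₂) ℂ,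
      {j | M.transpose j ≠ 0} ⊆ {j | X₀.transpose j ≠ 0} ∪ {j | W.transpose j ≠ 0} →
      {j | M.transpose j ≠ 0}.ncard ≤ 3 * s₂ := by
    intro M hM
    refine le_trans (Set.ncard_le_ncard hM (Set.toFinite _)) (le_trans (Set.ncard_union_le _ _) ?_)
    omega
  have htr_add : (X₀ + W).transpose = X₀.transpose + W.transpose := Matrix.transpose_add _ _
  have htr_sub : (X₀ - W).transpose = X₀.transpose - W.transpose := Matrix.transpose_sub _ _
  have hRIPp := hRIP (X₀ + W) hsum_rank
    (hrow_pm _ (ColumnUB.row_support_add X₀ W))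
    (hcol_pm _ (by rw [htr_add]; exact ColumnUB.row_support_add _ _))
  have hRIPm := hRIP (X₀ - W) hsub_rank
    (hrow_pm _ (ColumnUB.row_support_sub X₀ W))
    (hcol_pm _ (by rw [htr_sub]; exact ColumnUB.row_support_sub _ _))
  -- polarization
  set p : Fin m → ℂ := opA A X₀ with hpdef
  set q : Fin m → ℂ := opA A W with hqdef
  have hEadd : ColumnUB.toE p + ColumnUB.toE q = ColumnUB.toE (opA A (X₀ + W)) := by
    rw [ColumnUB.opA_add, ColumnUB.toE_add]
  have hEsub : ColumnUB.toE p - ColumnUB.toE q = ColumnUB.toE (opA A (X₀ - W)) := by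
    rw [ColumnUB.opA_sub, ColumnUB.toE_sub]
  have h1 := norm_add_sq (𝕜 := ℂ) (ColumnUB.toE p) (ColumnUB.toE q)
  have h2 := norm_sub_sq (𝕜 := ℂ) (ColumnUB.toE p) (ColumnUB.toE q)
  have h3 := norm_add_sq (𝕜 := ℂ) (ColumnUB.toME X₀) (ColumnUB.toME W)
  have h4 := norm_sub_sq (𝕜 := ℂ) (ColumnUB.toME X₀) (ColumnUB.toME W)
  rw [hEadd] at h1
  rw [hEsub] at h2
  have hMadd : ColumnUB.toME X₀ + ColumnUB.toME W = ColumnUB.toME (X₀ + W) := (ColumnUB.toME_add _ _).symm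
  have hMsub : ColumnUB.toME X₀ - ColumnUB.toME W = ColumnUB.toME (X₀ - W) := (ColumnUB.toME_sub _ _).symm
  rw [hMadd] at h3
  rw [hMsub] at h4
  rw [← ColumnUB.l2norm_eq, ← ColumnUB.l2norm_eq, ← ColumnUB.l2norm_eq] at h1 h2
  rw [← ColumnUB.frobNorm_eq, ← ColumnUB.frobNorm_eq, ← ColumnUB.frobNorm_eq] at h3 h4
  simp only [RCLike.re_to_complex] at h1 h2 h3 h4
  rw [hfrobX₀, hfrobW] at h3 h4
  have hpol : (inner ℂ (ColumnUB.toE p) (ColumnUB.toE q) : ℂ).re ≤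
      (inner ℂ (ColumnUB.toME X₀) (ColumnUB.toME W) : ℂ).re + δ := by
    have e1 := hRIPp.2
    have e2 := hRIPm.1
    rw [h3, h1] at e1
    rw [h4, h2] at e2
    linarith [e1, e2]
  -- noise bound
  have hnoise : (inner ℂ (ColumnUB.toE z) (ColumnUB.toE q) : ℂ).re ≤ ν * (1 + δ) := by
    have hcs : ‖(inner ℂ (ColumnUB.toE z) (ColumnUB.toE q) : ℂ)‖ ≤
        ‖ColumnUB.toE z‖ * ‖ColumnUB.toE q‖ := norm_inner_le_norm _ _
    have hre : (inner ℂ (ColumnUB.toE z) (ColumnUB.toE q) : ℂ).re ≤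
        ‖(inner ℂ (ColumnUB.toE z) (ColumnUB.toE q) : ℂ)‖ := Complex.re_le_norm _
    rw [← ColumnUB.l2norm_eq, ← ColumnUB.l2norm_eq] at hcs
    have hq0 : 0 ≤ l2norm q := Real.sqrt_nonneg _
    have hprod : l2norm (opA A X₀) * l2norm q ≤ 1 + δ :=
      ColumnUB.prod_bound hρ₀.le hq0 hAX₀sq hAWsq
    calc (inner ℂ (ColumnUB.toE z) (ColumnUB.toE q) : ℂ).re
        ≤ l2norm z * l2norm q := le_trans hre hcs
      _ = ν * (l2norm (opA A X₀) * l2norm q) := by rw [hz]; ring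
      _ ≤ ν * (1 + δ) := mul_le_mul_of_nonneg_left hprod hνnn
  -- chain main identities
  have step1 : (inner ℂ (ColumnUB.toME Y) (ColumnUB.toME W) : ℂ).re = frobNorm Y := by
    have heq : (inner ℂ (ColumnUB.toME Y) (ColumnUB.toME W) : ℂ) =
        ((c : ℝ) : ℂ) * inner ℂ (ColumnUB.toME Y) (ColumnUB.toME Y) := by
      rw [htW]; exact inner_smul_right _ _ _
    rw [heq]
    have him : (inner ℂ (ColumnUB.toME Y) (ColumnUB.toME Y) : ℂ).im = 0 := by
      have := inner_self_im (𝕜 := ℂ) (ColumnUB.toME Y)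
      simpa [RCLike.im_to_complex] using this
    have hre2 : (inner ℂ (ColumnUB.toME Y) (ColumnUB.toME Y) : ℂ).re = ‖ColumnUB.toME Y‖ ^ 2 := by
      have := inner_self_eq_norm_sq (𝕜 := ℂ) (ColumnUB.toME Y)
      simpa [RCLike.re_to_complex] using this
    rw [Complex.mul_re, Complex.ofReal_re, Complex.ofReal_im, him, hre2]
    rw [← ColumnUB.frobNorm_eq, hcdef]
    field_simp
    ring
  have step2 : (inner ℂ (ColumnUB.toME Y) (ColumnUB.toME W) : ℂ) =
      inner ℂ (ColumnUB.toME B) (ColumnUB.toME W) := by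
    rw [ColumnUB.innerME, ColumnUB.innerME]
    refine Finset.sum_congr rfl fun i _ => Finset.sum_congr rfl fun j _ => ?_
    by_cases hik : i ∈ J₁ ∧ j = k
    · have : Y i j = B i j := by
        rw [hYentry]
        simp [hik.1, hik.2]
      rw [this]
    · have hy : Y i j = 0 := hY0 i j (by tauto)
      have hw : W i j = 0 := hW0 i j (by tauto)
      rw [hy, hw]
      simp
  have step3 : (inner ℂ (ColumnUB.toME B) (ColumnUB.toME W) : ℂ) =
      inner ℂ (ColumnUB.toE b) (ColumnUB.toE q) := by
    rw [ColumnUB.innerME, ColumnUB.innerE, hBdef]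
    exact ColumnUB.adj_inner A b W
  have step4 : (inner ℂ (ColumnUB.toE b) (ColumnUB.toE q) : ℂ) =
      inner ℂ (ColumnUB.toE p) (ColumnUB.toE q) + inner ℂ (ColumnUB.toE z) (ColumnUB.toE q) := by
    have : ColumnUB.toE b = ColumnUB.toE p + ColumnUB.toE z := by
      rw [hb, ColumnUB.toE_add]
    rw [this, inner_add_left]
  -- signal bound
  have hP : (inner ℂ (ColumnUB.toME X₀) (ColumnUB.toME W) : ℂ).re ≤
      l2norm ((proj J₁).mulVec u) * ‖v k‖ := by
    set P : Matrix (Fin n₁) (Fin n₂) ℂ := proj J₁ * X₀ * proj {k} with hPdef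
    have hPentry : ∀ i j, P i j =
        (if i ∈ J₁ then 1 else 0) * X₀ i j * (if j ∈ ({k} : Finset (Fin n₂)) then 1 else 0) :=
      fun i j => projEntry J₁ {k} X₀ i j
    have heq : (inner ℂ (ColumnUB.toME X₀) (ColumnUB.toME W) : ℂ) =
        inner ℂ (ColumnUB.toME P) (ColumnUB.toME W) := by
      rw [ColumnUB.innerME, ColumnUB.innerME]
      refine Finset.sum_congr rfl fun i _ => Finset.sum_congr rfl fun j _ => ?_
      by_cases hik : i ∈ J₁ ∧ j = k
      · have : P i j = X₀ i j := by
          rw [hPentry]; simp [hik.1, hik.2]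
        rw [this]
      · have hw : W i j = 0 := hW0 i j (by tauto)
        rw [hw]; simp
    have hfrobP : frobNorm P = l2norm ((proj J₁).mulVec u) * ‖v k‖ := by
      have hent : ∀ i j, ‖P i j‖ ^ 2 =
          (if i ∈ J₁ then ‖u i‖ ^ 2 else 0) * (if j = k then ‖v k‖ ^ 2 else 0) := by
        intro i j
        rw [hPentry, hX₀entry]
        by_cases h1 : i ∈ J₁ <;> by_cases h2 : j = k <;>
          simp [h1, h2, norm_mul, mul_pow, Finset.mem_singleton]
      have hS : ∀ i, ‖((proj J₁).mulVec u) i‖ ^ 2 = if i ∈ J₁ then ‖u i‖ ^ 2 else 0 := by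
        intro i
        rw [proj, Matrix.mulVec_diagonal]
        by_cases h1 : i ∈ J₁ <;> simp [h1]
      unfold frobNorm l2norm
      calc Real.sqrt (∑ i, ∑ j, ‖P i j‖ ^ 2)
          = Real.sqrt ((∑ i, if i ∈ J₁ then ‖u i‖ ^ 2 else 0) * ∑ j, if j = k then ‖v k‖ ^ 2 else 0) := by
            rw [Finset.sum_mul_sum]
            congr 1
            exact Finset.sum_congr rfl fun i _ => Finset.sum_congr rfl fun j _ => hent i j
        _ = Real.sqrt (∑ i, if i ∈ J₁ then ‖u i‖ ^ 2 else 0) * ‖v k‖ := by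
            rw [Finset.sum_ite_eq' Finset.univ k (fun _ => ‖v k‖ ^ 2)]
            simp only [Finset.mem_univ, if_true]
            rw [Real.sqrt_mul (Finset.sum_nonneg fun i _ => by positivity), Real.sqrt_sq (norm_nonneg _)]
        _ = Real.sqrt (∑ i, ‖((proj J₁).mulVec u) i‖ ^ 2) * ‖v k‖ := by
            congr 2
            exact Finset.sum_congr rfl fun i _ => (hS i).symm
    calc (inner ℂ (ColumnUB.toME X₀) (ColumnUB.toME W) : ℂ).re
        ≤ ‖(inner ℂ (ColumnUB.toME P) (ColumnUB.toME W) : ℂ)‖ := by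
          rw [heq]; exact Complex.re_le_norm _
      _ ≤ ‖ColumnUB.toME P‖ * ‖ColumnUB.toME W‖ := norm_inner_le_norm _ _
      _ = frobNorm P * frobNorm W := by rw [ColumnUB.frobNorm_eq, ColumnUB.frobNorm_eq]
      _ = l2norm ((proj J₁).mulVec u) * ‖v k‖ := by rw [hfrobP, hfrobW, mul_one]
  -- conclude
  have hfinal : frobNorm Y = (inner ℂ (ColumnUB.toE p) (ColumnUB.toE q) : ℂ).re +
      (inner ℂ (ColumnUB.toE z) (ColumnUB.toE q) : ℂ).re := by
    rw [← step1, step2, step3, step4, Complex.add_re]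
  rw [hfinal]
  have := add_le_add (le_trans hpol (add_le_add_left hP δ)) hnoise
  linarith

end
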